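/- Let r, K, F₁, Z₁, S₁, L be positive integers and let Q be a (r,K,F₁,Z₁,S₁) MAPDA, modeled as Q : Fin F₁ → Fin K → Option (Fin S₁). Define the (L·F₁)×K array P : (Fin L × Fin F₁) → Fin K → Option (Fin (L·S₁)) by P (l,f) k = none if Q f k = none, and P (l,f) k = some (l·S₁ + s) (as an element of Fin (L·S₁)) if Q f k = some s. Then P is a (r, K, L·F₁, L·Z₁, L·S₁) MAPDA; that is: each column of P contains exactly L·Z₁ entries equal to none, every element of Fin (L·S₁) occurs at least once in P, every element of Fin (L·S₁) occurs at most once in each column of P, and for every s' ∈ Fin (L·S₁) and every row (l,f) of P containing s', the number of columns k that contain s' somewhere and satisfy P (l,f) k ≠ none is at most r. -/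

import Mathlib

lemma decode_aux {S₁ : ℕ} (hS₁ : 0 < S₁) {l s s' : ℕ} (hs : s < S₁)
    (h : l * S₁ + s = s') : l = s' / S₁ ∧ s = s' % S₁ := by
  subst h
  constructor
  · rw [Nat.mul_comm, Nat.mul_add_div hS₁, Nat.div_eq_of_lt hs, Nat.add_zero]
  · rw [Nat.mul_comm, Nat.mul_add_mod, Nat.mod_eq_of_lt hs]

theorem stmt_0
    (r K F₁ Z₁ S₁ L : ℕ)
    (hr : 0 < r) (hK : 0 < K) (hF₁ : 0 < F₁) (hZ₁ : 0 < Z₁) (hS₁ : 0 < S₁) (hL : 0 < L)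
    (Q : Fin F₁ → Fin K → Option (Fin S₁))
    -- C1: each column of Q contains exactly Z₁ stars (none)
    (hC1 : ∀ k : Fin K,
      (Finset.univ.filter (fun f : Fin F₁ => Q f k = none)).card = Z₁)
    -- C2: each integer occurs at least once
    (hC2 : ∀ s : Fin S₁, ∃ f k, Q f k = some s)
    -- C3: each integer occurs at most once in each column
    (hC3 : ∀ (s : Fin S₁) (k : Fin K),
      (Finset.univ.filter (fun f : Fin F₁ => Q f k = some s)).card ≤ 1)
    -- C4
    (hC4 : ∀ (s : Fin S₁) (f : Fin F₁), (∃ k, Q f k = some s) →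
      (Finset.univ.filter (fun k : Fin K =>
        (∃ f', Q f' k = some s) ∧ Q f k ≠ none)).card ≤ r)
    (P : (Fin L × Fin F₁) → Fin K → Option (Fin (L * S₁)))
    (hP : ∀ (l : Fin L) (f : Fin F₁) (k : Fin K),
      P (l, f) k = (Q f k).map (fun s =>
        (⟨l.val * S₁ + s.val, by
          calc l.val * S₁ + s.val < l.val * S₁ + S₁ := Nat.add_lt_add_left s.isLt _
            _ = (l.val + 1) * S₁ := (Nat.succ_mul _ _).symm
            _ ≤ L * S₁ := Nat.mul_le_mul_right _ l.isLt⟩ : Fin (L * S₁)))) :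
    -- C1 for P
    (∀ k : Fin K,
      (Finset.univ.filter (fun p : Fin L × Fin F₁ => P p k = none)).card = L * Z₁) ∧
    -- C2 for P
    (∀ s' : Fin (L * S₁), ∃ p k, P p k = some s') ∧
    -- C3 for P
    (∀ (s' : Fin (L * S₁)) (k : Fin K),
      (Finset.univ.filter (fun p : Fin L × Fin F₁ => P p k = some s')).card ≤ 1) ∧
    -- C4 for P
    (∀ (s' : Fin (L * S₁)) (p : Fin L × Fin F₁), (∃ k, P p k = some s') →
      (Finset.univ.filter (fun k : Fin K =>
        (∃ p', P p' k = some s') ∧ P p k ≠ none)).card ≤ r) := by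
  have hPnone : ∀ (p : Fin L × Fin F₁) (k : Fin K), P p k = none ↔ Q p.2 k = none := by
    rintro ⟨l, f⟩ k
    rw [hP]
    simp [Option.map_eq_none_iff]
  have hPsome : ∀ (l : Fin L) (f : Fin F₁) (k : Fin K) (s' : Fin (L * S₁)),
      P (l, f) k = some s' ↔
      (l.val = s'.val / S₁ ∧ Q f k = some ⟨s'.val % S₁, Nat.mod_lt _ hS₁⟩) := by
    intro l f k s'
    rw [hP]
    constructor
    · intro h
      obtain ⟨s, hs, heq⟩ := Option.map_eq_some_iff.mp h
      obtain ⟨h1, h2⟩ := decode_aux hS₁ s.isLt (congrArg Fin.val heq)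
      refine ⟨h1, ?_⟩
      rw [hs]
      exact congrArg some (Fin.ext h2)
    · rintro ⟨h1, h2⟩
      rw [h2, Option.map_some]
      exact congrArg some (Fin.ext (by simp only [h1]; exact Nat.div_add_mod' _ _))
  have hdivlt : ∀ s' : Fin (L * S₁), s'.val / S₁ < L := by
    intro s'
    exact Nat.div_lt_of_lt_mul (Nat.mul_comm L S₁ ▸ s'.isLt)
  refine ⟨?_, ?_, ?_, ?_⟩
  · -- C1
    intro k
    have : Finset.univ.filter (fun p : Fin L × Fin F₁ => P p k = none) =
        Finset.univ ×ˢ (Finset.univ.filter (fun f : Fin F₁ => Q f k = none)) := by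
      ext ⟨l, f⟩
      simp [hPnone (l, f) k]
    rw [this, Finset.card_product, Finset.card_univ, Fintype.card_fin, hC1]
  · -- C2
    intro s'
    obtain ⟨f, k, hfk⟩ := hC2 ⟨s'.val % S₁, Nat.mod_lt _ hS₁⟩
    exact ⟨(⟨s'.val / S₁, hdivlt s'⟩, f), k, (hPsome _ f k s').mpr ⟨rfl, hfk⟩⟩
  · -- C3
    intro s' k
    apply Finset.card_le_one.mpr
    rintro ⟨l₁, f₁⟩ h₁ ⟨l₂, f₂⟩ h₂
    rw [Finset.mem_filter] at h₁ h₂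
    obtain ⟨hl₁, hQ₁⟩ := (hPsome l₁ f₁ k s').mp h₁.2
    obtain ⟨hl₂, hQ₂⟩ := (hPsome l₂ f₂ k s').mp h₂.2
    have hf : f₁ = f₂ := by
      apply Finset.card_le_one.mp (hC3 ⟨s'.val % S₁, Nat.mod_lt _ hS₁⟩ k) <;>
        simp [Finset.mem_filter, hQ₁, hQ₂]
    have hl : l₁ = l₂ := Fin.ext (hl₁.trans hl₂.symm)
    rw [hf, hl]
  · -- C4
    rintro s' ⟨l, f⟩ ⟨k₀, hk₀⟩
    obtain ⟨hl, hQ⟩ := (hPsome l f k₀ s').mp hk₀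
    have heq : Finset.univ.filter (fun k : Fin K =>
        (∃ p', P p' k = some s') ∧ P (l, f) k ≠ none) =
        Finset.univ.filter (fun k : Fin K =>
        (∃ f', Q f' k = some ⟨s'.val % S₁, Nat.mod_lt _ hS₁⟩) ∧ Q f k ≠ none) := by
      ext k
      simp only [Finset.mem_filter, Finset.mem_univ, true_and]
      constructor
      · rintro ⟨⟨⟨l', f'⟩, hp'⟩, hne⟩
        exact ⟨⟨f', ((hPsome l' f' k s').mp hp').2⟩, fun h => hne ((hPnone (l, f) k).mpr h)⟩
      · rintro ⟨⟨f', hf'⟩, hne⟩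
        exact ⟨⟨(⟨s'.val / S₁, hdivlt s'⟩, f'), (hPsome _ f' k s').mpr ⟨rfl, hf'⟩⟩,
          fun h => hne ((hPnone (l, f) k).mp h)⟩
    rw [heq]
    exact hC4 _ f ⟨k₀, hQ⟩
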